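/- Let R be a finite commutative Frobenius ring with representatives a_0, …, a_t of its principal ideals, and define I = (I_0, …, I_t) by I_i = {j ∈ {0,…,t} : a_j a_k ≠ 0 for all k such that a_i a_k ≠ 0}. Then for all i, j ∈ {0,…,t}, j ∈ I_i if and only if a_iR ⊆ a_jR; that is, the matrix P^I (with (i,j) entry 1 if j ∈ I_i and 0 otherwise) is the adjacency matrix of the poset of principal ideals of R under set inclusion. Consequently P^I is invertible as a matrix over ℚ. -/

import Mathlib

noncomputable section
open scoped BigOperators

/-- The dual of a linear code `C ⊆ Rⁿ` with respect to the standard inner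
product `u·v = ∑ ℓ, u ℓ * v ℓ`. -/
def dualCode {R : Type*} [CommRing R] {n : ℕ} (C : Submodule R (Fin n → R)) :
    Submodule R (Fin n → R) where
  carrier := {v | ∀ u ∈ C, ∑ ℓ, u ℓ * v ℓ = 0}
  add_mem' := by
    intro v w hv hw u hu
    simp only [Set.mem_setOf_eq] at *
    have h1 := hv u hu
    have h2 := hw u hu
    simp only [Pi.add_apply, mul_add, Finset.sum_add_distrib, h1, h2, add_zero]
  zero_mem' := by
    intro u hu
    simp
  smul_mem' := by
    intro c v hv u hu
    simp only [Set.mem_setOf_eq] at *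
    have h := hv u hu
    have : ∑ ℓ, u ℓ * (c • v) ℓ = c * ∑ ℓ, u ℓ * v ℓ := by
      rw [Finset.mul_sum]
      exact Finset.sum_congr rfl fun ℓ _ => by
        simp only [Pi.smul_apply, smul_eq_mul]; ring
    rw [this, h, mul_zero]

/-- A finite commutative ring is Frobenius iff `|C|·|C⊥| = |R|ⁿ` for every
linear code `C` of every length `n` over `R`. -/
def IsFrobeniusRing (R : Type*) [CommRing R] [Fintype R] : Prop :=
  ∀ (n : ℕ) (C : Submodule R (Fin n → R)),
    Nat.card C * Nat.card (dualCode C) = Fintype.card R ^ n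

section Aux

variable {R : Type*} [CommRing R] [Fintype R]

/-- The annihilator of an ideal, as an ideal. -/
def annI (J : Ideal R) : Ideal R where
  carrier := {r | ∀ s ∈ J, s * r = 0}
  add_mem' := by
    intro x y hx hy s hs
    rw [mul_add, hx s hs, hy s hs, add_zero]
  zero_mem' := fun s _ => mul_zero s
  smul_mem' := by
    intro c x hx s hs
    show s * (c * x) = 0
    rw [mul_left_comm, hx s hs, mul_zero]

lemma mem_annI {J : Ideal R} {r : R} : r ∈ annI J ↔ ∀ s ∈ J, s * r = 0 := Iff.rfl

/-- The length-1 code corresponding to an ideal. -/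
def codeOf (J : Ideal R) : Submodule R (Fin 1 → R) where
  carrier := {v | v 0 ∈ J}
  add_mem' := fun hx hy => J.add_mem hx hy
  zero_mem' := J.zero_mem
  smul_mem' := fun c _ hv => J.smul_mem c hv

lemma mem_codeOf {J : Ideal R} {v : Fin 1 → R} : v ∈ codeOf J ↔ v 0 ∈ J := Iff.rfl

lemma mem_dualCode {n : ℕ} {C : Submodule R (Fin n → R)} {v : Fin n → R} :
    v ∈ dualCode C ↔ ∀ u ∈ C, ∑ ℓ, u ℓ * v ℓ = 0 := Iff.rfl

lemma card_codeOf (J : Ideal R) : Nat.card (codeOf J) = Nat.card J :=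
  Nat.card_congr
    { toFun := fun v => ⟨v.1 0, v.2⟩
      invFun := fun r => ⟨fun _ => r.1, r.2⟩
      left_inv := by
        rintro ⟨v, hv⟩
        ext ℓ
        have : ℓ = 0 := Subsingleton.elim _ _
        simp [this]
      right_inv := fun r => rfl }

lemma dual_codeOf (J : Ideal R) : dualCode (codeOf J) = codeOf (annI J) := by
  ext v
  rw [mem_dualCode, mem_codeOf, mem_annI]
  constructor
  · intro h s hs
    have := h (fun _ => s) (mem_codeOf.mpr hs)
    simpa [Fin.sum_univ_one] using this
  · intro h u hu
    rw [Fin.sum_univ_one]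
    exact h (u 0) hu

lemma card_mul_card_annI (hR : IsFrobeniusRing R) (J : Ideal R) :
    Nat.card J * Nat.card (annI J) = Fintype.card R := by
  have := hR 1 (codeOf J)
  rwa [pow_one, dual_codeOf, card_codeOf, card_codeOf] at this

lemma annI_antitone {J K : Ideal R} (h : J ≤ K) : annI K ≤ annI J :=
  fun r hr s hs => hr s (h hs)

lemma le_annI_annI (J : Ideal R) : J ≤ annI (annI J) := by
  intro s hs r hr
  rw [mul_comm]
  exact hr s hs

lemma annI_annI (hR : IsFrobeniusRing R) (J : Ideal R) : annI (annI J) = J := by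
  have h1 := card_mul_card_annI hR J
  have h2 := card_mul_card_annI hR (annI J)
  have hpos : 0 < Nat.card (annI J) := Nat.card_pos
  have hcard : Nat.card (annI (annI J)) = Nat.card J := by
    have : Nat.card (annI J) * Nat.card (annI (annI J)) =
        Nat.card (annI J) * Nat.card J := by
      rw [h2, ← h1, mul_comm]
    exact Nat.eq_of_mul_eq_mul_left hpos this
  have hsub : (J : Set R) ⊆ (annI (annI J) : Set R) := le_annI_annI J
  have hle : (annI (annI J) : Set R).ncard ≤ (J : Set R).ncard := by
    rw [← Nat.card_coe_set_eq, ← Nat.card_coe_set_eq]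
    simp only [SetLike.coe_sort_coe]
    rw [hcard]
  have := Set.eq_of_subset_of_ncard_le hsub hle (Set.toFinite _)
  exact (SetLike.ext' this.symm)

end Aux

open Classical

/-- with `I_i = {j : a_j a_k ≠ 0 for all k with a_i a_k ≠ 0}`,
one has `j ∈ I_i ↔ a_i R ⊆ a_j R`, i.e. the matrix `P^I` is the adjacency
matrix of the poset of principal ideals of `R` under inclusion; consequently
`P^I` is invertible over `ℚ`. -/
theorem stmt7 {R : Type*} [CommRing R] [Fintype R] (hR : IsFrobeniusRing R)
    {t : ℕ} (a : Fin (t + 1) → R)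
    (hrep : ∀ r : R, ∃ i, Ideal.span {r} = Ideal.span {a i})
    (hinj : ∀ i j, Ideal.span {a i} = Ideal.span {a j} → i = j)
    (I : Fin (t + 1) → Set (Fin (t + 1)))
    (hI : ∀ i, I i = {j | ∀ k, a i * a k ≠ 0 → a j * a k ≠ 0})
    (P : Matrix (Fin (t + 1)) (Fin (t + 1)) ℚ)
    (hP : ∀ i j, P i j = if j ∈ I i then 1 else 0) :
    (∀ i j, j ∈ I i ↔ Ideal.span {a i} ≤ Ideal.span {a j}) ∧ IsUnit P := by
  classical
  have hiff : ∀ i j, (∀ k, a i * a k ≠ 0 → a j * a k ≠ 0) ↔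
      Ideal.span {a i} ≤ Ideal.span {a j} := by
    intro i j
    constructor
    · intro H
      have h1 : annI (Ideal.span {a j}) ≤ annI (Ideal.span {a i}) := by
        intro r hr
        obtain ⟨k, hk⟩ := hrep r
        have hjr : a j * r = 0 := hr (a j) (Ideal.subset_span rfl)
        have hak : a k ∈ Ideal.span {r} := by
          rw [hk]; exact Ideal.subset_span rfl
        obtain ⟨c, hc⟩ := Ideal.mem_span_singleton'.mp hak
        have hjk : a j * a k = 0 := by
          rw [← hc, mul_left_comm, hjr, mul_zero]
        have hik : a i * a k = 0 := by
          by_contra hne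
          exact H k hne hjk
        have hr' : r ∈ Ideal.span {a k} := by
          rw [← hk]; exact Ideal.subset_span rfl
        obtain ⟨d, hd⟩ := Ideal.mem_span_singleton'.mp hr'
        have hir : a i * r = 0 := by
          rw [← hd, mul_left_comm, hik, mul_zero]
        intro s hs
        obtain ⟨e, he⟩ := Ideal.mem_span_singleton'.mp hs
        rw [← he, mul_assoc, hir, mul_zero]
      have h2 := annI_antitone h1
      rwa [annI_annI hR, annI_annI hR] at h2
    · intro hle k hik hjk
      apply hik
      have : a i ∈ Ideal.span {a j} := hle (Ideal.subset_span rfl)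
      obtain ⟨c, hc⟩ := Ideal.mem_span_singleton'.mp this
      rw [← hc, mul_assoc, hjk, mul_zero]
  have hmem : ∀ i j, j ∈ I i ↔ Ideal.span {a i} ≤ Ideal.span {a j} := by
    intro i j
    rw [hI i, Set.mem_setOf_eq]
    exact hiff i j
  refine ⟨hmem, ?_⟩
  set f : Fin (t + 1) → ℕ := fun i => Nat.card (Ideal.span {a i} : Ideal R) with hf
  set σ := Tuple.sort f with hσ
  have hmono : Monotone (f ∘ σ) := Tuple.monotone_sort f
  have htri : (P.submatrix σ σ).BlockTriangular id := by
    intro i j hij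
    simp only [id] at hij
    show P (σ i) (σ j) = 0
    rw [hP, if_neg]
    intro hmem'
    have hle : Ideal.span {a (σ i)} ≤ Ideal.span {a (σ j)} := (hmem _ _).mp hmem'
    rcases eq_or_ne (Ideal.span {a (σ i)} : Ideal R) (Ideal.span {a (σ j)}) with heq | hne
    · exact absurd (σ.injective (hinj _ _ heq)) (ne_of_gt hij)
    · have hlt : (Ideal.span {a (σ i)} : Ideal R) < Ideal.span {a (σ j)} :=
        lt_of_le_of_ne hle hne
      have hss : ((Ideal.span {a (σ i)} : Ideal R) : Set R) ⊂
          ((Ideal.span {a (σ j)} : Ideal R) : Set R) := SetLike.coe_ssubset_coe.mpr hlt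
      have hcardlt : f (σ i) < f (σ j) := by
        have := Set.ncard_lt_ncard hss (Set.toFinite _)
        simpa only [hf, ← Nat.card_coe_set_eq, SetLike.coe_sort_coe] using this
      have := hmono (le_of_lt hij)
      simp only [Function.comp] at this
      omega
  have hdiag : ∀ i, (P.submatrix σ σ) i i = 1 := by
    intro i
    show P (σ i) (σ i) = 1
    rw [hP, if_pos ((hmem _ _).mpr le_rfl)]
  have hdet : P.det = 1 := by
    rw [← Matrix.det_submatrix_equiv_self σ P,
      Matrix.det_of_upperTriangular htri]
    exact Finset.prod_eq_one fun i _ => hdiag i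
  exact (Matrix.isUnit_iff_isUnit_det P).mpr (hdet ▸ isUnit_one)


end
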